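/- arXiv:2208.06922 — 2 statements merged into one kernel-verified Lean document; each statement's English description precedes it below -/
import Mathlib

section
/- There is a constant C such that for all integers n \ge 3, \omega(n) \le (\log n / \log\log n)(1 + C/\log\log n), where \omega(n) is the number of distinct prime divisors of n. -/
open Finset Nat

noncomputable def th (N : ℕ) : ℝ := ∑ p ∈ (N+1).primesBelow, Real.log p

lemma th_nonneg (N : ℕ) : 0 ≤ th N := by
  apply Finset.sum_nonneg
  intro p hp
  exact Real.log_nonneg (by exact_mod_cast (Nat.prime_of_mem_primesBelow hp).one_lt.le)

lemma th_le (N : ℕ) : th N ≤ N * Real.log 4 := by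
  have h1 : th N = Real.log (primorial N) := by
    rw [primorial, Nat.cast_prod, Real.log_prod]
    · rfl
    · intro p hp
      have := (Nat.prime_of_mem_primesBelow hp).pos
      positivity
  rw [h1]
  calc Real.log (primorial N) ≤ Real.log ((4:ℕ)^N) := by
        apply Real.log_le_log (by exact_mod_cast primorial_pos N)
        exact_mod_cast primorial_le_4_pow N
    _ = N * Real.log 4 := by
        rw [Real.log_pow]; norm_num

lemma sqrt_cast_le (N : ℕ) : (N.sqrt : ℝ) ≤ Real.sqrt N := by
  rw [show ((N.sqrt:ℝ)) = Real.sqrt ((N.sqrt:ℝ)^2) by rw [Real.sqrt_sq (by positivity)]]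
  apply Real.sqrt_le_sqrt
  exact_mod_cast Nat.sqrt_le' N

lemma pi_le {N : ℕ} (hN : 64 ≤ N) :
    (((N+1).primesBelow.card : ℝ)) ≤ Real.sqrt N + 4 * Real.log 2 * N / Real.log N := by
  set s := N.sqrt with hs
  have hsub : (s+1).primesBelow ⊆ (N+1).primesBelow := by
    intro p hp
    rw [Nat.mem_primesBelow] at hp ⊢
    exact ⟨hp.1.trans_le (by
      have : s ≤ N := Nat.sqrt_le_self N
      omega), hp.2⟩
  have hcard : (N+1).primesBelow.card = (s+1).primesBelow.card
      + ((N+1).primesBelow \ (s+1).primesBelow).card := by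
    have := Finset.card_sdiff_add_card_eq_card hsub
    omega
  -- card of small primes
  have h1 : ((s+1).primesBelow.card : ℝ) ≤ Real.sqrt N := by
    have hsub2 : (s+1).primesBelow ⊆ Finset.Ico 2 (s+1) := by
      intro p hp
      rw [Nat.mem_primesBelow] at hp
      rw [Finset.mem_Ico]
      exact ⟨hp.2.two_le, hp.1⟩
    have := Finset.card_le_card hsub2
    rw [Nat.card_Ico] at this
    calc ((s+1).primesBelow.card : ℝ) ≤ ((s+1) - 2 : ℕ) := by exact_mod_cast this
      _ ≤ (s : ℝ) := by
          have : (s+1) - 2 ≤ s := by omega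
          exact_mod_cast this
      _ ≤ Real.sqrt N := sqrt_cast_le N
  -- card of big primes
  have hlogN : (0:ℝ) < Real.log N := Real.log_pos (by exact_mod_cast (by omega : 1 < N))
  have hhalf : (1/2 : ℝ) * Real.log N ≤ Real.log (s+1) := by
    have h : Real.sqrt N ≤ ((s:ℝ)+1) := by
      have hnat := Nat.lt_succ_sqrt N
      have h2 : (N:ℝ) < ((s:ℝ)+1)^2 := by
        have : (N:ℝ) < ((s:ℝ)+1) * ((s:ℝ)+1) := by exact_mod_cast hnat
        nlinarith [this]
      calc Real.sqrt N ≤ Real.sqrt (((s:ℝ)+1)^2) := Real.sqrt_le_sqrt h2.le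
        _ = (s:ℝ)+1 := Real.sqrt_sq (by positivity)
    calc (1/2:ℝ) * Real.log N = Real.log (Real.sqrt N) := by
          rw [Real.log_sqrt (by positivity)]; ring
      _ ≤ Real.log ((s:ℝ)+1) := Real.log_le_log (Real.sqrt_pos.mpr (by exact_mod_cast (by omega : 0 < N))) h
  set R := (N+1).primesBelow \ (s+1).primesBelow with hR
  have h2 : (R.card : ℝ) * Real.log (s+1) ≤ th N := by
    calc (R.card : ℝ) * Real.log (s+1) = ∑ _p ∈ R, Real.log (s+1) := by
          rw [Finset.sum_const, nsmul_eq_mul]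
      _ ≤ ∑ p ∈ R, Real.log p := by
          apply Finset.sum_le_sum
          intro p hp
          apply Real.log_le_log (by positivity)
          rw [hR, Finset.mem_sdiff, Nat.mem_primesBelow] at hp
          have : ¬ (p < s + 1) := fun h => hp.2 (Nat.mem_primesBelow.mpr ⟨h, hp.1.2⟩)
          exact_mod_cast Nat.le_of_not_lt this
      _ ≤ th N := by
          apply Finset.sum_le_sum_of_subset_of_nonneg (Finset.sdiff_subset)
          intro p hp _
          exact Real.log_nonneg (by exact_mod_cast (Nat.prime_of_mem_primesBelow hp).one_lt.le)
  have h3 : (R.card : ℝ) ≤ 4 * Real.log 2 * N / Real.log N := by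
    rw [le_div_iff₀ hlogN]
    have hlog4 : Real.log 4 = 2 * Real.log 2 := by
      rw [show (4:ℝ) = 2^2 by norm_num, Real.log_pow]; push_cast; ring
    nlinarith [th_le N, h2, hhalf, Nat.cast_nonneg (α := ℝ) R.card, th_nonneg N]
  calc ((N+1).primesBelow.card : ℝ) = ((s+1).primesBelow.card : ℝ) + (R.card : ℝ) := by
        exact_mod_cast hcard
    _ ≤ Real.sqrt N + 4 * Real.log 2 * N / Real.log N := add_le_add h1 h3

noncomputable def Ee (N : ℕ) : ℝ := ∑ p ∈ (N+1).primesBelow, Real.log (2*N/p)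

lemma primesBelow_card_le (N : ℕ) : ((N+1).primesBelow.card : ℝ) ≤ N := by
  have hsub : (N+1).primesBelow ⊆ Finset.Ico 2 (N+1) := by
    intro p hp
    rw [Nat.mem_primesBelow] at hp
    rw [Finset.mem_Ico]
    exact ⟨hp.2.two_le, hp.1⟩
  have := Finset.card_le_card hsub
  rw [Nat.card_Ico] at this
  calc ((N+1).primesBelow.card : ℝ) ≤ ((N+1) - 2 : ℕ) := by exact_mod_cast this
    _ ≤ (N : ℝ) := by exact_mod_cast (by omega : (N+1) - 2 ≤ N)

lemma Ee_crude {N : ℕ} (h : 1 ≤ N) : Ee N ≤ N * Real.log N := by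
  have hterm : ∀ p ∈ (N+1).primesBelow, Real.log (2*N/p) ≤ Real.log N := by
    intro p hp
    have hp2 : (2:ℝ) ≤ p := by exact_mod_cast (Nat.prime_of_mem_primesBelow hp).two_le
    apply Real.log_le_log (by positivity)
    rw [div_le_iff₀ (by positivity)]
    nlinarith [show (0:ℝ) < N by exact_mod_cast (show 0 < N by omega)]
  calc Ee N ≤ ∑ _p ∈ (N+1).primesBelow, Real.log N := Finset.sum_le_sum hterm
    _ = ((N+1).primesBelow.card : ℝ) * Real.log N := by rw [Finset.sum_const, nsmul_eq_mul]
    _ ≤ N * Real.log N := by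
        apply mul_le_mul_of_nonneg_right (primesBelow_card_le N)
        exact Real.log_natCast_nonneg N

lemma Ee_step {N : ℕ} (hN : 64 ≤ N) :
    Ee N ≤ Ee (N/2) + 2 * Real.log 2 * ((N+1).primesBelow.card : ℝ) := by
  set M := N/2 with hM
  have hMN : M ≤ N := Nat.div_le_self N 2
  have hM32 : 32 ≤ M := by omega
  have h4M : (N : ℝ) ≤ 4 * M + 2 := by
    have : 2 * M + 1 ≥ N := by omega
    have := (Nat.cast_le (α := ℝ)).mpr this.le
    push_cast at this ⊢
    nlinarith [Nat.cast_nonneg (α := ℝ) M]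
  have hsub : (M+1).primesBelow ⊆ (N+1).primesBelow := by
    intro p hp
    rw [Nat.mem_primesBelow] at hp ⊢
    exact ⟨by omega, hp.2⟩
  have hsplit : Ee N = (∑ p ∈ (M+1).primesBelow, Real.log (2*N/p))
      + ∑ p ∈ (N+1).primesBelow \ (M+1).primesBelow, Real.log (2*N/p) := by
    rw [Ee, ← Finset.sum_sdiff hsub, add_comm]
  rw [hsplit]
  have hlog4 : Real.log 4 = 2 * Real.log 2 := by
    rw [show (4:ℝ) = 2^2 by norm_num, Real.log_pow]; push_cast; ring
  have hMpos : (0:ℝ) < M := by exact_mod_cast (by omega : 0 < M)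
  have h1 : ∑ p ∈ (M+1).primesBelow, Real.log (2*N/p)
      ≤ Ee M + 2 * Real.log 2 * ((M+1).primesBelow.card : ℝ) := by
    have hterm : ∀ p ∈ (M+1).primesBelow,
        Real.log (2*N/p) ≤ Real.log (2*M/p) + 2*Real.log 2 := by
      intro p hp
      have hppos : (0:ℝ) < p := by exact_mod_cast (Nat.prime_of_mem_primesBelow hp).pos
      have hle : (2*(N:ℝ))/p ≤ 4*(2*(M:ℝ)/p) := by
        rw [show (4:ℝ)*(2*(M:ℝ)/p) = 8*M/p by ring]
        refine (div_le_div_iff_of_pos_right hppos).mpr ?_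
        have h4M' : (N:ℝ) ≤ 4*M := by exact_mod_cast (by omega : N ≤ 4*M)
        nlinarith
      calc Real.log (2*N/p) ≤ Real.log (4*(2*M/p)) := Real.log_le_log (by positivity) hle
        _ = Real.log (2*M/p) + 2*Real.log 2 := by
            rw [Real.log_mul (by norm_num) (by positivity), hlog4]; ring
    calc ∑ p ∈ (M+1).primesBelow, Real.log (2*N/p)
        ≤ ∑ p ∈ (M+1).primesBelow, (Real.log (2*M/p) + 2*Real.log 2) :=
          Finset.sum_le_sum hterm
      _ = Ee M + 2 * Real.log 2 * ((M+1).primesBelow.card : ℝ) := by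
          rw [Finset.sum_add_distrib, Finset.sum_const, nsmul_eq_mul, Ee]; ring
  have h2 : ∑ p ∈ (N+1).primesBelow \ (M+1).primesBelow, Real.log (2*N/p)
      ≤ (((N+1).primesBelow \ (M+1).primesBelow).card : ℝ) * (2 * Real.log 2) := by
    calc ∑ p ∈ (N+1).primesBelow \ (M+1).primesBelow, Real.log (2*N/p)
        ≤ ∑ _p ∈ (N+1).primesBelow \ (M+1).primesBelow, (2*Real.log 2) := by
          apply Finset.sum_le_sum
          intro p hp
          have hpM : M + 1 ≤ p := by
            rw [Finset.mem_sdiff, Nat.mem_primesBelow] at hp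
            by_contra hc
            exact hp.2 (Nat.mem_primesBelow.mpr ⟨by omega, hp.1.2⟩)
          have hppos : (0:ℝ) < p := by
            exact_mod_cast (Nat.prime_of_mem_primesBelow (Finset.mem_sdiff.mp hp).1).pos
          have hle : (2*(N:ℝ))/p ≤ 4 := by
            rw [div_le_iff₀ hppos]
            have hcast : ((M:ℝ) + 1) ≤ p := by exact_mod_cast hpM
            have hN2M : (N:ℝ) ≤ 2*M + 1 := by exact_mod_cast (by omega : N ≤ 2*M+1)
            nlinarith
          calc Real.log (2*N/p) ≤ Real.log 4 := Real.log_le_log (by positivity) hle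
            _ = 2*Real.log 2 := hlog4
      _ = (((N+1).primesBelow \ (M+1).primesBelow).card : ℝ) * (2*Real.log 2) := by
          rw [Finset.sum_const, nsmul_eq_mul]
  have hcard : ((N+1).primesBelow.card : ℝ) = ((M+1).primesBelow.card : ℝ)
      + (((N+1).primesBelow \ (M+1).primesBelow).card : ℝ) := by
    have := Finset.card_sdiff_add_card_eq_card hsub
    exact_mod_cast (by omega : (N+1).primesBelow.card = (M+1).primesBelow.card + ((N+1).primesBelow \ (M+1).primesBelow).card)
  have hmul := congrArg (fun x : ℝ => 2*Real.log 2 * x) hcard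
  linarith [h1, h2, hsplit.le, hmul.le, hmul.ge]

lemma Ee_le : ∀ N : ℕ, 2 ≤ N → Ee N ≤ 64 * N / Real.log N := by
  intro N
  induction N using Nat.strong_induction_on with
  | _ N ih =>
    intro hN2
    have hNpos : (0:ℝ) < N := by exact_mod_cast (by omega : 0 < N)
    have hlogN : (0:ℝ) < Real.log N := Real.log_pos (by exact_mod_cast (by omega : 1 < N))
    by_cases hbig : 64 ≤ N
    · -- inductive step
      set M := N/2 with hM
      have hM2 : 2 ≤ M := by omega
      have hMpos : (0:ℝ) < M := by exact_mod_cast (by omega : 0 < M)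
      have ihM := ih M (by omega) hM2
      have hstep := Ee_step hbig
      have hpi := pi_le hbig
      have hl2pos : (0:ℝ) < Real.log 2 := Real.log_pos (by norm_num)
      have hl2u : Real.log 2 < 0.6931471808 := Real.log_two_lt_d9
      have hl2l : (0.6931471803:ℝ) < Real.log 2 := Real.log_two_gt_d9
      have hl64 : 6 * Real.log 2 ≤ Real.log N := by
        calc 6 * Real.log 2 = Real.log (2^6) := by rw [Real.log_pow]; push_cast; ring
          _ ≤ Real.log N := Real.log_le_log (by norm_num) (by exact_mod_cast (by omega : 2^6 ≤ N))
      have ha : (0:ℝ) < Real.log M := Real.log_pos (by exact_mod_cast (by omega : 1 < M))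
      have haℓ : Real.log N - 2*Real.log 2 ≤ Real.log M := by
        have h4 : (N:ℝ)/4 ≤ M := by
          have : N ≤ 4*M := by omega
          have := (Nat.cast_le (α := ℝ)).mpr this
          push_cast at this
          linarith
        calc Real.log N - 2*Real.log 2 = Real.log ((N:ℝ)/4) := by
              rw [Real.log_div (by positivity) (by norm_num)]
              rw [show (4:ℝ) = 2^2 by norm_num, Real.log_pow]
              push_cast; ring
          _ ≤ Real.log M := Real.log_le_log (by positivity) h4
      have hM_le : (M:ℝ) ≤ (N:ℝ)/2 := by
        have : 2*M ≤ N := by omega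
        have := (Nat.cast_le (α := ℝ)).mpr this
        push_cast at this
        linarith
      have hsqrt : Real.sqrt N ≤ 2*N/Real.log N := by
        have h1 : Real.log N ≤ 2 * Real.sqrt N := by
          have := Real.log_le_sub_one_of_pos (Real.sqrt_pos.mpr hNpos)
          have h2 : Real.log (Real.sqrt N) = Real.log N / 2 := Real.log_sqrt hNpos.le
          linarith
        rw [le_div_iff₀ hlogN]
        have hsq : Real.sqrt N * Real.sqrt N = N := Real.mul_self_sqrt hNpos.le
        nlinarith [Real.sqrt_nonneg (N:ℝ)]
      have T1 : 64*(M:ℝ)/Real.log M ≤ 50*N/Real.log N := by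
        rw [div_le_div_iff₀ ha hlogN]
        have p1 : (M:ℝ) * Real.log N ≤ ((N:ℝ)/2) * Real.log N :=
          mul_le_mul_of_nonneg_right hM_le hlogN.le
        have p2 : (N:ℝ) * (Real.log N - 2*Real.log 2) ≤ (N:ℝ) * Real.log M :=
          mul_le_mul_of_nonneg_left haℓ hNpos.le
        have p3 : (N:ℝ) * (6*Real.log 2) ≤ (N:ℝ) * Real.log N :=
          mul_le_mul_of_nonneg_left hl64 hNpos.le
        nlinarith [p1, p2, p3]
      have hNl : (0:ℝ) ≤ (N:ℝ)/Real.log N := by positivity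
      calc Ee N ≤ Ee M + 2 * Real.log 2 * ((N+1).primesBelow.card : ℝ) := hstep
        _ ≤ 64*(M:ℝ)/Real.log M
            + 2*Real.log 2 * (Real.sqrt N + 4 * Real.log 2 * N / Real.log N) := by
            have := mul_le_mul_of_nonneg_left hpi hl2pos.le
            linarith [ihM]
        _ ≤ 50*(N:ℝ)/Real.log N
            + 2*Real.log 2 * (2*N/Real.log N + 4 * Real.log 2 * N / Real.log N) := by
            have := mul_le_mul_of_nonneg_left (add_le_add_right hsqrt (4 * Real.log 2 * N / Real.log N)) hl2pos.le
            linarith [T1]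
        _ ≤ 64 * N / Real.log N := by
            have hexp : 2*Real.log 2 * (2*(N:ℝ)/Real.log N + 4 * Real.log 2 * N / Real.log N)
                = (4*Real.log 2 + 8*Real.log 2*Real.log 2) * ((N:ℝ)/Real.log N) := by ring
            have hco : (4*Real.log 2 + 8*Real.log 2*Real.log 2) ≤ 14 := by nlinarith
            have h50 : 50*(N:ℝ)/Real.log N = 50 * ((N:ℝ)/Real.log N) := by ring
            have h64 : 64*(N:ℝ)/Real.log N = 64 * ((N:ℝ)/Real.log N) := by ring
            nlinarith [mul_le_mul_of_nonneg_right hco hNl]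
    · -- base case
      push_neg at hbig
      have hcrude := Ee_crude (by omega : 1 ≤ N)
      have hlog_le : Real.log N ≤ 8 := by
        calc Real.log N ≤ Real.log 64 := Real.log_le_log hNpos (by exact_mod_cast (by omega : N ≤ 64))
          _ = 6 * Real.log 2 := by
              rw [show (64:ℝ) = 2^6 by norm_num, Real.log_pow]; push_cast; ring
          _ ≤ 8 := by nlinarith [Real.log_two_lt_d9]
      rw [le_div_iff₀ hlogN]
      have h1 : Ee N * Real.log N ≤ (N * Real.log N) * Real.log N :=
        mul_le_mul_of_nonneg_right hcrude hlogN.le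
      have h2 : Real.log N * Real.log N ≤ 64 := by nlinarith [hlogN.le, hlog_le]
      have h3 : (N:ℝ) * (Real.log N * Real.log N) ≤ (N:ℝ) * 64 :=
        mul_le_mul_of_nonneg_left h2 hNpos.le
      nlinarith [h1, h3]

theorem omega_upper_bound :
    ∃ C : ℝ, ∀ n : ℕ, 3 ≤ n →
      (n.primeFactors.card : ℝ) ≤
        (Real.log n / Real.log (Real.log n)) * (1 + C / Real.log (Real.log n)) := by
  use 200
  intro n hn
  have hnpos : (0:ℝ) < n := by exact_mod_cast (by omega : 0 < n)
  set X := Real.log n with hX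
  set L := Real.log X with hL
  set k := n.primeFactors.card with hk
  have hX1 : 1 < X := by
    rw [hX, ← Real.log_exp 1]
    apply Real.log_lt_log (Real.exp_pos 1)
    calc Real.exp 1 < 2.7182818286 := Real.exp_one_lt_d9
      _ ≤ (3:ℝ) := by norm_num
      _ ≤ n := by exact_mod_cast hn
  have hXpos : (0:ℝ) < X := by linarith
  have hLpos : (0:ℝ) < L := Real.log_pos hX1
  have hl2pos : (0:ℝ) < Real.log 2 := Real.log_pos (by norm_num)
  have hl2u : Real.log 2 < 0.6931471808 := Real.log_two_lt_d9
  -- reduce goal to k * (L*L) ≤ X * (L + 200)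
  have hgoal : (X / L) * (1 + 200 / L) = X * (L + 200) / (L * L) := by
    field_simp
  rw [hgoal, le_div_iff₀ (by positivity)]
  -- sum of logs of prime factors is at most X
  have hsumlog : ∑ p ∈ n.primeFactors, Real.log p ≤ X := by
    have hdvd := Nat.prod_primeFactors_dvd n
    have hle : (∏ p ∈ n.primeFactors, p : ℕ) ≤ n := Nat.le_of_dvd (by omega) hdvd
    calc ∑ p ∈ n.primeFactors, Real.log p
        = Real.log ((∏ p ∈ n.primeFactors, p : ℕ) : ℝ) := by
          rw [Nat.cast_prod, Real.log_prod]
          intro p hp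
          have := (Nat.prime_of_mem_primeFactors hp).pos
          positivity
      _ ≤ X := by
          apply Real.log_le_log
          · exact_mod_cast Finset.prod_pos fun p hp => (Nat.prime_of_mem_primeFactors hp).pos
          · exact_mod_cast hle
  by_cases hX4 : X < 4
  · -- small case: use 2^k ≤ n
    have hklog2 : (k:ℝ) * Real.log 2 ≤ X := by
      have h2 : ∀ p ∈ n.primeFactors, Real.log 2 ≤ Real.log p := by
        intro p hp
        exact Real.log_le_log (by norm_num)
          (by exact_mod_cast (Nat.prime_of_mem_primeFactors hp).two_le)
      calc (k:ℝ) * Real.log 2 = ∑ _p ∈ n.primeFactors, Real.log 2 := by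
            rw [Finset.sum_const, nsmul_eq_mul]
      _ ≤ ∑ p ∈ n.primeFactors, Real.log p := Finset.sum_le_sum h2
      _ ≤ X := hsumlog
    have hLle : L ≤ 2 * Real.log 2 := by
      calc L ≤ Real.log 4 := Real.log_le_log hXpos (by linarith)
        _ = 2 * Real.log 2 := by
            rw [show (4:ℝ) = 2^2 by norm_num, Real.log_pow]; push_cast; ring
    have hL14 : L ≤ 1.4 := by nlinarith
    have h1 : ((k:ℝ) * Real.log 2) * (L * L) ≤ X * (L * L) :=
      mul_le_mul_of_nonneg_right hklog2 (by positivity)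
    have h2 : L * L ≤ 2 := by nlinarith
    nlinarith [h1, h2, hXpos, hLpos, hl2pos, hl2u, mul_pos hXpos hLpos]
  · -- main case: X ≥ 4
    push_neg at hX4
    set N := ⌊X⌋₊ with hN
    have hN4 : 4 ≤ N := Nat.le_floor (by exact_mod_cast hX4)
    have hNX : (N:ℝ) ≤ X := Nat.floor_le hXpos.le
    have hXN1 : X < N + 1 := Nat.lt_floor_add_one X
    have hNpos : (0:ℝ) < N := by exact_mod_cast (by omega : 0 < N)
    have hX2N : X ≤ 2 * N := by linarith [hXN1, show (1:ℝ) ≤ N by exact_mod_cast (by omega : 1 ≤ N)]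
    have hlogNpos : (0:ℝ) < Real.log N := Real.log_pos (by exact_mod_cast (by omega : 1 < N))
    -- Step 1 : k * L ≤ X + E
    set P₁ := n.primeFactors.filter (fun p => p ≤ N) with hP₁
    set P₂ := n.primeFactors.filter (fun p => ¬ p ≤ N) with hP₂
    have hEdef : ∀ p ∈ (N+1).primesBelow, (0:ℝ) ≤ L - Real.log p := by
      intro p hp
      have hpN : p ≤ N := by have := Nat.lt_of_mem_primesBelow hp; omega
      have : Real.log p ≤ L := Real.log_le_log
        (by exact_mod_cast (Nat.prime_of_mem_primesBelow hp).pos)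
        (le_trans (by exact_mod_cast hpN) hNX)
      linarith
    have hstep1 : (k:ℝ) * L ≤ X + ∑ p ∈ (N+1).primesBelow, (L - Real.log p) := by
      have hsplit : (k:ℝ) * L = (∑ p ∈ P₁, (L - Real.log p)) + (∑ p ∈ P₁, Real.log p)
          + ∑ _p ∈ P₂, L := by
        rw [hk]
        have : ((n.primeFactors.card : ℝ)) * L = ∑ _p ∈ n.primeFactors, L := by
          rw [Finset.sum_const, nsmul_eq_mul]
        rw [this, ← Finset.sum_filter_add_sum_filter_not n.primeFactors (fun p => p ≤ N)]
        rw [← hP₁, ← hP₂]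
        rw [Finset.sum_sub_distrib]
        ring
      have hb1 : ∑ p ∈ P₁, (L - Real.log p) ≤ ∑ p ∈ (N+1).primesBelow, (L - Real.log p) := by
        apply Finset.sum_le_sum_of_subset_of_nonneg
        · intro p hp
          rw [hP₁, Finset.mem_filter] at hp
          exact Nat.mem_primesBelow.mpr ⟨by omega, Nat.prime_of_mem_primeFactors hp.1⟩
        · intro p hp _
          exact hEdef p hp
      have hb2 : ∑ _p ∈ P₂, L ≤ ∑ p ∈ P₂, Real.log p := by
        apply Finset.sum_le_sum
        intro p hp
        rw [hP₂, Finset.mem_filter] at hp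
        apply Real.log_le_log hXpos
        have hp1 : ((N:ℝ)) + 1 ≤ p := by exact_mod_cast (by omega : N + 1 ≤ p)
        linarith
      have hb3 : (∑ p ∈ P₁, Real.log p) + (∑ p ∈ P₂, Real.log p) ≤ X := by
        rw [hP₁, hP₂, Finset.sum_filter_add_sum_filter_not]
        exact hsumlog
      linarith [hsplit.le, hb1, hb2, hb3]
    -- Step 2 : E ≤ Ee N
    have hstep2 : ∑ p ∈ (N+1).primesBelow, (L - Real.log p) ≤ Ee N := by
      rw [Ee]
      apply Finset.sum_le_sum
      intro p hp
      have hppos : (0:ℝ) < p := by exact_mod_cast (Nat.prime_of_mem_primesBelow hp).pos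
      rw [Real.log_div (by positivity) (by positivity)]
      have : L ≤ Real.log (2*N) := Real.log_le_log hXpos hX2N
      linarith
    -- Step 3 : Ee N ≤ 128 * X / L
    have hstep3 : Ee N ≤ 128 * X / L := by
      have h1 := Ee_le N (by omega)
      have hlogNge : L - Real.log 2 ≤ Real.log N := by
        have hX2 : X / 2 ≤ N := by linarith
        calc L - Real.log 2 = Real.log (X/2) := by
              rw [Real.log_div (by positivity) (by norm_num)]
          _ ≤ Real.log N := Real.log_le_log (by positivity) hX2
      have hL2l2 : 2 * Real.log 2 ≤ L := by
        calc 2 * Real.log 2 = Real.log 4 := by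
              rw [show (4:ℝ) = 2^2 by norm_num, Real.log_pow]; push_cast; ring
          _ ≤ L := Real.log_le_log (by norm_num) hX4
      have hhalf : L / 2 ≤ Real.log N := by linarith
      have h2 : 64 * (N:ℝ) / Real.log N ≤ 128 * X / L := by
        rw [div_le_div_iff₀ hlogNpos hLpos]
        have p1 : 64 * (N:ℝ) * L ≤ 64 * X * L :=
          mul_le_mul_of_nonneg_right (by linarith) hLpos.le
        have p2 : 64 * X * L ≤ 128 * X * Real.log N := by
          have := mul_le_mul_of_nonneg_left hhalf (by positivity : (0:ℝ) ≤ 128 * X)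
          linarith [this]
        linarith
      linarith
    -- assemble
    have hfinal : (k:ℝ) * L ≤ X + 128 * X / L := by linarith
    have hmul := mul_le_mul_of_nonneg_right hfinal hLpos.le
    have hdiv : (128 * X / L) * L = 128 * X := by field_simp
    nlinarith [hmul, hdiv, hXpos, hLpos]
end

section
/- Let k be real and let Q = \sum_{r=0}^{\ell} (kP)^r / r! where P is a complex number with |kP| > A/(1-1/k) for k < 0 and A = \alpha^{-3/4}. Then |Q| \le |(k-1) e^{(e(1-1/k))^{-1}} \alpha^{3/4} P|^{\ell}, provided \ell \ge e^2 \alpha^{-3/4}. -/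
theorem truncated_exp_Q_bound (k α : ℝ) (hk : k < 0) (hα0 : 0 < α) (hα1 : α < 1)
    (ℓ : ℕ) (hℓ : Real.exp 1 ^ 2 * α ^ (-(3 / 4) : ℝ) ≤ (ℓ : ℝ)) (P : ℂ)
    (h : α ^ (-(3 / 4) : ℝ) / (1 - 1 / k) < ‖(k : ℂ) * P‖) :
    ‖∑ r ∈ Finset.range (ℓ + 1), ((k : ℂ) * P) ^ r / (Nat.factorial r : ℂ)‖ ≤
      ‖((((k - 1) * Real.exp ((Real.exp 1 * (1 - 1 / k))⁻¹) * α ^ ((3 : ℝ) / 4) : ℝ)) : ℂ)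
          * P‖ ^ ℓ := by
  set x := ‖(k : ℂ) * P‖ with hxdef
  set s := 1 - 1/k with hsdef
  set A := α ^ (-(3/4) : ℝ) with hAdef
  set t := α ^ ((3:ℝ)/4) with htdef
  set E := Real.exp ((Real.exp 1 * s)⁻¹) with hEdef
  have hA : 0 < A := Real.rpow_pos_of_pos hα0 _
  have ht : 0 < t := Real.rpow_pos_of_pos hα0 _
  have htA : t = A⁻¹ := by
    rw [htdef, hAdef, ← Real.rpow_neg hα0.le]; norm_num
  have hk' : 1/k < 0 := one_div_neg.mpr hk
  have hs1 : 1 < s := by rw [hsdef]; linarith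
  have hs0 : 0 < s := by linarith
  have hx0 : 0 < x := lt_trans (by positivity) h
  set B := s * t with hBdef
  have hB : 0 < B := by positivity
  have hBinv : B⁻¹ = A / s := by
    rw [hBdef, htA]; field_simp
  have hxB : 1 < x * B := by
    have h' : B⁻¹ < x := by rw [hBinv]; exact h
    calc (1:ℝ) = B⁻¹ * B := (inv_mul_cancel₀ hB.ne').symm
      _ < x * B := by exact mul_lt_mul_of_pos_right h' hB
  have hE : 0 < E := Real.exp_pos _
  have hexp1 : (1:ℝ) < Real.exp 1 := by
    have := Real.exp_one_gt_d9; linarith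
  -- step: exp B⁻¹ ≤ E ^ ℓ
  have hexpE : Real.exp B⁻¹ ≤ E ^ ℓ := by
    have key : Real.exp 1 * A ≤ (ℓ : ℝ) := by nlinarith
    rw [hEdef, ← Real.exp_nat_mul]
    apply Real.exp_le_exp.mpr
    rw [hBinv, ← div_eq_mul_inv, div_le_div_iff₀ hs0 (by positivity)]
    nlinarith [mul_le_mul_of_nonneg_right key hs0.le]
  calc ‖∑ r ∈ Finset.range (ℓ + 1), ((k : ℂ) * P) ^ r / (Nat.factorial r : ℂ)‖
      ≤ ∑ r ∈ Finset.range (ℓ + 1), ‖((k : ℂ) * P) ^ r / (Nat.factorial r : ℂ)‖ :=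
        norm_sum_le _ _
    _ = ∑ r ∈ Finset.range (ℓ + 1), x ^ r / (Nat.factorial r : ℝ) := by
        refine Finset.sum_congr rfl fun r _ => ?_
        rw [hxdef, norm_div, norm_pow]
        norm_num
    _ ≤ ∑ r ∈ Finset.range (ℓ + 1), (x * B) ^ ℓ * (B⁻¹ ^ r / (Nat.factorial r : ℝ)) := by
        refine Finset.sum_le_sum fun r hr => ?_
        have hr' : r ≤ ℓ := Nat.lt_succ_iff.mp (Finset.mem_range.mp hr)
        have hxr : x ^ r = (x * B) ^ r * B⁻¹ ^ r := by
          rw [← mul_pow, mul_assoc, mul_inv_cancel₀ hB.ne', mul_one]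
        rw [hxr, mul_div_assoc]
        gcongr
        exact hxB.le
    _ = (x * B) ^ ℓ * ∑ r ∈ Finset.range (ℓ + 1), B⁻¹ ^ r / (Nat.factorial r : ℝ) := by
        rw [Finset.mul_sum]
    _ ≤ (x * B) ^ ℓ * Real.exp B⁻¹ :=
        mul_le_mul_of_nonneg_left (Real.sum_le_exp_of_nonneg (by positivity) _)
          (by positivity)
    _ ≤ (x * B) ^ ℓ * E ^ ℓ := mul_le_mul_of_nonneg_left hexpE (by positivity)
    _ = (x * B * E) ^ ℓ := (mul_pow _ _ _).symm
    _ = ‖((((k - 1) * E * t : ℝ)) : ℂ) * P‖ ^ ℓ := by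
        congr 1
        rw [norm_mul, Complex.norm_real, hxdef, norm_mul, Complex.norm_real,
          Real.norm_eq_abs, Real.norm_eq_abs]
        have hne : (k - 1) * E * t < 0 :=
          mul_neg_of_neg_of_pos (mul_neg_of_neg_of_pos (by linarith) hE) ht
        rw [abs_of_neg hk, abs_of_neg hne, hBdef, hsdef]
        have hkne : k ≠ 0 := hk.ne
        field_simp
end
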